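/- Let d ≥ 1 be an integer, α ∈ (0,2), β ∈ (0,1), and suppose 0 < η ≤ α/(βd). Let G be a measurable kernel satisfying the lower heat-kernel bound, let V₀ : ℝ^d → [0,∞) be measurable and not almost everywhere zero, and let V : (0,∞) × ℝ^d → [0,∞] be a mild solution with initial data V₀. Then there exists t₀ > 0 such that V(t,x) = ∞ for all t > t₀ and all x ∈ ℝ^d. -/

import Mathlib

open MeasureTheory ENNReal

/-- Auxiliary: lower bound for the integral of `1/s` over `Ioo a b`. -/
lemma aux_log_integral (a b : ℝ) (ha : 0 < a) (hab : a ≤ b) :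
    ENNReal.ofReal (Real.log (b / a)) ≤ ∫⁻ s in Set.Ioo a b, ENNReal.ofReal s⁻¹ := by
  have hb : 0 < b := lt_of_lt_of_le ha hab
  have hcont : ContinuousOn (fun s : ℝ => s⁻¹) (Set.Icc a b) := by
    apply ContinuousOn.inv₀ continuousOn_id
    intro x hx
    exact ne_of_gt (lt_of_lt_of_le ha hx.1)
  have hint : IntegrableOn (fun s : ℝ => s⁻¹) (Set.Ioo a b) :=
    (hcont.integrableOn_Icc).mono_set Set.Ioo_subset_Icc_self
  have hnn : 0 ≤ᵐ[volume.restrict (Set.Ioo a b)] (fun s : ℝ => s⁻¹) := by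
    refine (ae_restrict_iff' measurableSet_Ioo).2 (Filter.Eventually.of_forall ?_)
    intro x hx
    exact inv_nonneg.2 (le_of_lt (lt_trans ha hx.1))
  have h1 : ENNReal.ofReal (∫ s in Set.Ioo a b, s⁻¹) = ∫⁻ s in Set.Ioo a b, ENNReal.ofReal s⁻¹ :=
    ofReal_integral_eq_lintegral_ofReal hint hnn
  rw [← h1]
  apply ENNReal.ofReal_le_ofReal
  have h2 : (∫ s in Set.Ioo a b, s⁻¹) = ∫ s in a..b, s⁻¹ := by
    rw [intervalIntegral.integral_of_le hab, integral_Ioc_eq_integral_Ioo]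
  rw [h2, integral_inv_of_pos ha hb]

/-- Auxiliary: an extended nonneg real dominating `a * μ'^n` for all `n` is infinite. -/
lemma aux_unbounded (v : ℝ≥0∞) (a q : ℝ) (ha : 0 < a) (hq : 1 < q)
    (h : ∀ n : ℕ, ENNReal.ofReal (a * q ^ n) ≤ v) : v = ⊤ := by
  by_contra hv
  obtain ⟨n, hn⟩ := pow_unbounded_of_one_lt (v.toReal / a) hq
  have h2 : a * q ^ n ≤ v.toReal := (ENNReal.ofReal_le_iff_le_toReal hv).1 (h n)
  have h3 : v.toReal < a * q ^ n := by
    have := (div_lt_iff₀ ha).1 hn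
    nlinarith
  linarith

set_option maxHeartbeats 2000000 in
/-- Theorem 1.1 / Fujita-type blow-up for `0 < η ≤ α/(βd)`.
If `G` satisfies the lower heat-kernel bound, `V₀ ≥ 0` is not a.e. zero, and `V` is a
mild solution of `∂_t^β V = -(-Δ)^{α/2} V + I_t^{1-β}[V^{1+η}]`, then there exists
`t₀ > 0` such that `V(t,x) = ∞` for all `t > t₀` and all `x`. -/
theorem no_global_solution_subcritical
    (d : ℕ) (hd : 1 ≤ d) (α β η : ℝ)
    (hα : α ∈ Set.Ioo (0 : ℝ) 2) (hβ : β ∈ Set.Ioo (0 : ℝ) 1)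
    (hη : 0 < η) (hηc : η ≤ α / (β * d))
    (G : ℝ → EuclideanSpace ℝ (Fin d) → ℝ)
    (hGmeas : Measurable (Function.uncurry G))
    (hGnonneg : ∀ t x, 0 ≤ G t x)
    (c₁ : ℝ) (hc₁ : 0 < c₁)
    (hGlower : ∀ t : ℝ, 0 < t → ∀ x : EuclideanSpace ℝ (Fin d),
      c₁ * min (t ^ (-(β * d) / α)) (t ^ β / ‖x‖ ^ ((d : ℝ) + α)) ≤ G t x)
    (V₀ : EuclideanSpace ℝ (Fin d) → ℝ)
    (hV₀meas : Measurable V₀) (hV₀nonneg : ∀ x, 0 ≤ V₀ x)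
    (hV₀ne : ¬ (V₀ =ᵐ[volume] 0))
    (V : ℝ → EuclideanSpace ℝ (Fin d) → ℝ≥0∞)
    (hVmeas : Measurable (Function.uncurry V))
    (hmild : ∀ t : ℝ, 0 < t → ∀ x : EuclideanSpace ℝ (Fin d),
      V t x
        = (∫⁻ y, ENNReal.ofReal (G t (x - y)) * ENNReal.ofReal (V₀ y))
          + ∫⁻ s in Set.Ioo (0 : ℝ) t,
              ∫⁻ y, ENNReal.ofReal (G (t - s) (x - y)) * (V s y) ^ (1 + η)) :
    ∃ t₀ : ℝ, 0 < t₀ ∧ ∀ t : ℝ, t₀ < t → ∀ x : EuclideanSpace ℝ (Fin d), V t x = ∞ := by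
  obtain ⟨hα0, hα2⟩ := hα
  obtain ⟨hβ0, hβ1⟩ := hβ
  have hd0 : (0:ℝ) < d := by exact_mod_cast hd
  haveI : Nonempty (Fin d) := ⟨⟨0, hd⟩⟩
  set σ : ℝ := β * d / α with hσdef
  have hσ0 : 0 < σ := by positivity
  have hση : σ * η ≤ 1 := by
    rw [hσdef, div_mul_eq_mul_div, div_le_one hα0]
    calc β * ↑d * η ≤ β * ↑d * (α / (β * ↑d)) := by
          apply mul_le_mul_of_nonneg_left hηc (by positivity)
      _ = α := by field_simp
  have hdα : 0 < (d:ℝ) + α := by positivity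
  -- rewritten kernel lower bound
  have hGlow : ∀ t : ℝ, 0 < t → ∀ z : EuclideanSpace ℝ (Fin d),
      c₁ * min (t ^ (-σ)) (t ^ β / ‖z‖ ^ ((d:ℝ) + α)) ≤ G t z := by
    intro t ht z
    have h := hGlower t ht z
    rw [neg_div] at h
    exact h
  -- singletons are null
  have hsing : ∀ x : EuclideanSpace ℝ (Fin d),
      volume ({x} : Set (EuclideanSpace ℝ (Fin d))) = 0 := by
    intro x
    rw [← Metric.closedBall_zero, Measure.addHaar_closedBall _ _ le_rfl,
      finrank_euclideanSpace_fin, zero_pow (by omega), ENNReal.ofReal_zero, zero_mul]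
  -- generic inner-integral lower bound
  have key_inner : ∀ (A : Set (EuclideanSpace ℝ (Fin d))), MeasurableSet A →
      ∀ (x : EuclideanSpace ℝ (Fin d)) (c : ℝ≥0∞) (W : EuclideanSpace ℝ (Fin d) → ℝ≥0∞),
      (∀ y ∈ A, y ≠ x → c ≤ W y) → c * volume A ≤ ∫⁻ y, W y := by
    intro A hA x c W h
    have h1 : c * volume A = c * volume (A \ {x}) := by
      rw [measure_diff_null (hsing x)]
    rw [h1, ← setLIntegral_const]
    calc (∫⁻ _ in A \ {x}, c) ≤ ∫⁻ y in A \ {x}, W y := by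
          refine lintegral_mono_ae ((ae_restrict_iff'
            (hA.diff (measurableSet_singleton x))).2 (Filter.Eventually.of_forall ?_))
          intro y hy
          exact h y hy.1 (fun he => hy.2 (Set.mem_singleton_iff.2 he))
      _ ≤ ∫⁻ y, W y := setLIntegral_le_lintegral _ _
  -- lower bound for V via the nonlinear term
  have nonlin : ∀ (t : ℝ) (x : EuclideanSpace ℝ (Fin d)) (s₁ s₂ : ℝ), 0 < s₁ → s₁ ≤ s₂ → s₂ ≤ t →
      ∀ g : ℝ → ℝ≥0∞,
      (∀ s ∈ Set.Ioo s₁ s₂, g s ≤ ∫⁻ y, ENNReal.ofReal (G (t-s) (x-y)) * (V s y) ^ (1+η)) →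
      (∫⁻ s in Set.Ioo s₁ s₂, g s) ≤ V t x := by
    intro t x s₁ s₂ h1 h12 h2t g hg
    have ht : 0 < t := lt_of_lt_of_le (lt_of_lt_of_le h1 h12) h2t
    rw [hmild t ht x]
    calc (∫⁻ s in Set.Ioo s₁ s₂, g s)
        ≤ ∫⁻ s in Set.Ioo s₁ s₂, ∫⁻ y, ENNReal.ofReal (G (t-s) (x-y)) * (V s y) ^ (1+η) :=
          lintegral_mono_ae ((ae_restrict_iff' measurableSet_Ioo).2
            (Filter.Eventually.of_forall hg))
      _ ≤ ∫⁻ s in Set.Ioo 0 t, ∫⁻ y, ENNReal.ofReal (G (t-s) (x-y)) * (V s y) ^ (1+η) :=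
          lintegral_mono_set (Set.Ioo_subset_Ioo (le_of_lt h1) h2t)
      _ ≤ _ := le_add_self
  -- initial mass
  have hmass : ∃ (ε R : ℝ) (S : Set (EuclideanSpace ℝ (Fin d))), 0 < ε ∧ 1 ≤ R ∧
      MeasurableSet S ∧ (∀ y ∈ S, ‖y‖ ≤ R) ∧ 0 < volume S ∧ volume S ≠ ⊤ ∧
      ∀ y ∈ S, ε ≤ V₀ y := by
    have hpos : volume {x | 0 < V₀ x} ≠ 0 := by
      intro h0
      apply hV₀ne
      rw [Filter.EventuallyEq, ae_iff]
      refine measure_mono_null ?_ h0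
      intro x hx
      simp only [Set.mem_setOf_eq, Pi.zero_apply] at hx ⊢
      exact lt_of_le_of_ne (hV₀nonneg x) (Ne.symm hx)
    set Sn : ℕ → Set (EuclideanSpace ℝ (Fin d)) :=
      fun n => {x | ‖x‖ ≤ (n:ℝ)+1 ∧ (1:ℝ)/((n:ℝ)+1) ≤ V₀ x} with hSndef
    have hcover : {x | 0 < V₀ x} ⊆ ⋃ n, Sn n := by
      intro x hx
      simp only [Set.mem_setOf_eq] at hx
      obtain ⟨n, hn⟩ := exists_nat_gt (max ‖x‖ (1 / V₀ x))
      rw [max_lt_iff] at hn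
      refine Set.mem_iUnion.2 ⟨n, ?_, ?_⟩
      · linarith [hn.1]
      · rw [div_le_iff₀ (by positivity)]
        have h2 : 1 / V₀ x ≤ (n:ℝ)+1 := by linarith [hn.2]
        rw [div_le_iff₀ hx] at h2
        nlinarith
    have hex : ∃ n, volume (Sn n) ≠ 0 := by
      by_contra hcon
      push_neg at hcon
      exact hpos (measure_mono_null hcover (measure_iUnion_null hcon))
    obtain ⟨n, hn⟩ := hex
    have hmeas : MeasurableSet (Sn n) := by
      apply MeasurableSet.inter
      · exact measurableSet_le measurable_norm measurable_const
      · exact measurableSet_le measurable_const hV₀meas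
    have hfin : volume (Sn n) ≠ ⊤ := by
      have hsub : Sn n ⊆ Metric.closedBall (0 : EuclideanSpace ℝ (Fin d)) ((n:ℝ)+1) :=
        fun y hy => mem_closedBall_zero_iff.2 hy.1
      exact ne_top_of_le_ne_top (ne_of_lt measure_closedBall_lt_top) (measure_mono hsub)
    exact ⟨1/((n:ℝ)+1), (n:ℝ)+1, Sn n, by positivity,
      by have := Nat.cast_nonneg (α := ℝ) n; linarith, hmeas,
      fun y hy => hy.1, pos_iff_ne_zero.2 hn, hfin, fun y hy => hy.2⟩
  obtain ⟨ε, R, S, hε, hR1, hSmeas, hSR, hS0, hSfin, hSV⟩ := hmass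
  -- time threshold
  set T₀ : ℝ := max 1 (R ^ (α/β)) with hT₀def
  have hT₀1 : (1:ℝ) ≤ T₀ := le_max_left _ _
  have hT₀0 : (0:ℝ) < T₀ := lt_of_lt_of_le one_pos hT₀1
  have hR0 : (0:ℝ) < R := lt_of_lt_of_le one_pos hR1
  have hT₀R : ∀ t : ℝ, T₀ ≤ t → R ≤ t ^ (β/α) := by
    intro t ht
    have h1 : R ^ (α/β) ≤ t := le_trans (le_max_right _ _) ht
    have h2 : (R ^ (α/β)) ^ (β/α) ≤ t ^ (β/α) :=
      Real.rpow_le_rpow (by positivity) h1 (by positivity)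
    have h3 : (R ^ (α/β)) ^ (β/α) = R := by
      rw [← Real.rpow_mul (le_of_lt hR0)]
      rw [show α/β*(β/α) = 1 by field_simp, Real.rpow_one]
    rwa [h3] at h2
  have h2w : (0:ℝ) < (2:ℝ) ^ ((d:ℝ)+α) := by positivity
  have h2w1 : (1:ℝ) ≤ (2:ℝ) ^ ((d:ℝ)+α) := by
    rw [show (1:ℝ) = (2:ℝ)^(0:ℝ) from (Real.rpow_zero 2).symm]
    exact Real.rpow_le_rpow_of_exponent_le one_le_two (by positivity)
  -- exponent identity (β/α)*(d+α) = σ + β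
  have hexpid : β/α*((d:ℝ)+α) = σ + β := by
    rw [hσdef]; field_simp
  set A0 : ℝ := c₁ * ((2:ℝ) ^ ((d:ℝ)+α))⁻¹ * ε * (volume S).toReal with hA0def
  have hvolS : 0 < (volume S).toReal := ENNReal.toReal_pos (ne_of_gt hS0) hSfin
  have hA0 : 0 < A0 := by positivity
  -- Lemma A: base lower bound
  have lemA : ∀ t : ℝ, T₀ ≤ t → ∀ x : EuclideanSpace ℝ (Fin d), ‖x‖ ≤ t ^ (β/α) →
      ENNReal.ofReal (A0 * t ^ (-σ)) ≤ V t x := by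
    intro t ht x hx
    have ht0 : 0 < t := lt_of_lt_of_le hT₀0 ht
    have htσ : 0 < t ^ (-σ) := Real.rpow_pos_of_pos ht0 _
    have hlin : ENNReal.ofReal (c₁ * (((2:ℝ) ^ ((d:ℝ)+α))⁻¹ * t ^ (-σ)) * ε) * volume S ≤
        ∫⁻ y, ENNReal.ofReal (G t (x - y)) * ENNReal.ofReal (V₀ y) := by
      apply key_inner S hSmeas x
      intro y hyS hyx
      have hz : 0 < ‖x - y‖ := by
        rw [norm_pos_iff]
        exact sub_ne_zero.2 (fun he => hyx he.symm)
      have hzb : ‖x - y‖ ≤ 2 * t ^ (β/α) := by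
        calc ‖x - y‖ ≤ ‖x‖ + ‖y‖ := norm_sub_le x y
          _ ≤ t^(β/α) + t^(β/α) := add_le_add hx (le_trans (hSR y hyS) (hT₀R t ht))
          _ = 2 * t^(β/α) := by ring
      have hGb : c₁ * (((2:ℝ)^((d:ℝ)+α))⁻¹ * t ^ (-σ)) ≤ G t (x - y) := by
        refine le_trans ?_ (hGlow t ht0 (x - y))
        refine mul_le_mul_of_nonneg_left ?_ (le_of_lt hc₁)
        rw [le_min_iff]
        constructor
        · exact mul_le_of_le_one_left (le_of_lt htσ) (inv_le_one_of_one_le₀ h2w1)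
        · have hxy : ‖x - y‖ ^ ((d:ℝ)+α) ≤ (2 * t^(β/α)) ^ ((d:ℝ)+α) :=
            Real.rpow_le_rpow (le_of_lt hz) hzb (le_of_lt hdα)
          have hexp : (2 * t^(β/α)) ^ ((d:ℝ)+α) = 2^((d:ℝ)+α) * t ^ (σ + β) := by
            rw [Real.mul_rpow (by norm_num) (by positivity),
              ← Real.rpow_mul (le_of_lt ht0), hexpid]
          have h5 : t^β / (2^((d:ℝ)+α) * t^(σ+β)) = ((2:ℝ)^((d:ℝ)+α))⁻¹ * t^(-σ) := by
            rw [Real.rpow_add ht0 σ β, Real.rpow_neg (le_of_lt ht0)]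
            have hσp : (0:ℝ) < t ^ σ := Real.rpow_pos_of_pos ht0 _
            have hβp : (0:ℝ) < t ^ β := Real.rpow_pos_of_pos ht0 _
            field_simp
          calc ((2:ℝ)^((d:ℝ)+α))⁻¹ * t^(-σ)
              = t^β / (2^((d:ℝ)+α) * t^(σ+β)) := h5.symm
            _ ≤ t^β / ‖x - y‖^((d:ℝ)+α) := by
                apply div_le_div_of_nonneg_left (by positivity)
                  (Real.rpow_pos_of_pos hz _)
                rw [hexp] at hxy
                exact hxy
      calc ENNReal.ofReal (c₁ * (((2:ℝ)^((d:ℝ)+α))⁻¹ * t^(-σ)) * ε)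
          = ENNReal.ofReal (c₁ * (((2:ℝ)^((d:ℝ)+α))⁻¹ * t^(-σ))) * ENNReal.ofReal ε := by
            rw [← ENNReal.ofReal_mul (by positivity)]
        _ ≤ ENNReal.ofReal (G t (x-y)) * ENNReal.ofReal (V₀ y) :=
            mul_le_mul' (ENNReal.ofReal_le_ofReal hGb) (ENNReal.ofReal_le_ofReal (hSV y hyS))
    have heq : ENNReal.ofReal (A0 * t^(-σ)) =
        ENNReal.ofReal (c₁ * (((2:ℝ)^((d:ℝ)+α))⁻¹ * t^(-σ)) * ε) * volume S := by
      rw [← ENNReal.ofReal_toReal hSfin, ← ENNReal.ofReal_mul (by positivity)]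
      congr 1
      rw [hA0def]; ring
    rw [hmild t ht0 x]
    calc ENNReal.ofReal (A0 * t^(-σ))
        = ENNReal.ofReal (c₁ * (((2:ℝ)^((d:ℝ)+α))⁻¹ * t^(-σ)) * ε) * volume S := heq
      _ ≤ ∫⁻ y, ENNReal.ofReal (G t (x - y)) * ENNReal.ofReal (V₀ y) := hlin
      _ ≤ _ := le_self_add
  -- ball volume facts
  set vB : ℝ := (volume (Metric.ball (0:EuclideanSpace ℝ (Fin d)) 1)).toReal with hvBdef
  have hvB : 0 < vB :=
    ENNReal.toReal_pos (ne_of_gt (Metric.measure_ball_pos _ _ one_pos)) (ne_of_lt measure_ball_lt_top)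
  have volball : ∀ ρ : ℝ, 0 ≤ ρ → volume (Metric.ball (0:EuclideanSpace ℝ (Fin d)) ρ) =
      ENNReal.ofReal (ρ ^ d * vB) := by
    intro ρ hρ
    rw [Measure.addHaar_ball _ _ hρ, finrank_euclideanSpace_fin,
      ENNReal.ofReal_mul (by positivity), hvBdef,
      ENNReal.ofReal_toReal (ne_of_lt measure_ball_lt_top)]
  -- constant for Lemma B
  set c₃ : ℝ := min 1 ((2:ℝ)^(β + ((d:ℝ)+α)))⁻¹ with hc₃def
  have hc₃0 : 0 < c₃ := lt_min one_pos (by positivity)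
  set B0 : ℝ := c₁ * c₃ * A0^(1+η) * vB with hB0def
  have hB0 : 0 < B0 := by positivity
  -- Lemma B: improved lower bound with a logarithmic factor
  have lemB : ∀ t : ℝ, 4*T₀ ≤ t → ∀ x : EuclideanSpace ℝ (Fin d), ‖x‖ ≤ t ^ (β/α) →
      ENNReal.ofReal (B0 * Real.log (t/(2*T₀)) * t ^ (-σ)) ≤ V t x := by
    intro t ht x hx
    have ht0 : 0 < t := by linarith
    have htσ : 0 < t ^ (-σ) := Real.rpow_pos_of_pos ht0 _
    have hT₀t2 : T₀ ≤ t/2 := by linarith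
    have hlog0 : 0 ≤ Real.log (t/(2*T₀)) := by
      apply Real.log_nonneg
      rw [le_div_iff₀ (by positivity)]
      linarith
    refine le_trans ?_ (nonlin t x T₀ (t/2) hT₀0 hT₀t2 (by linarith)
      (fun s => ENNReal.ofReal (B0 * t^(-σ)) * ENNReal.ofReal s⁻¹) ?_)
    · -- the s-integral dominates the log
      rw [lintegral_const_mul' _ _ ENNReal.ofReal_ne_top]
      have h1 : ENNReal.ofReal (Real.log ((t/2)/T₀)) ≤ ∫⁻ s in Set.Ioo T₀ (t/2), ENNReal.ofReal s⁻¹ :=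
        aux_log_integral T₀ (t/2) hT₀0 hT₀t2
      rw [show (t/2)/T₀ = t/(2*T₀) by rw [div_div]] at h1
      calc ENNReal.ofReal (B0 * Real.log (t/(2*T₀)) * t ^ (-σ))
          = ENNReal.ofReal (B0 * t^(-σ)) * ENNReal.ofReal (Real.log (t/(2*T₀))) := by
            rw [← ENNReal.ofReal_mul (by positivity)]; congr 1; ring
        _ ≤ _ := mul_le_mul' le_rfl h1
    · -- pointwise inner bound for each s
      intro s hs
      have hs0 : 0 < s := lt_trans hT₀0 hs.1
      have hsT₀ : T₀ ≤ s := le_of_lt hs.1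
      have hs1 : 1 ≤ s := le_trans hT₀1 hsT₀
      have hst : s < t := lt_of_lt_of_le hs.2 (by linarith)
      have hts : 0 < t - s := by linarith
      have hts2 : t/2 ≤ t - s := by linarith [hs.2]
      have hsβ : 0 < s ^ (β/α) := Real.rpow_pos_of_pos hs0 _
      have hsσ : 0 < s ^ (-σ) := Real.rpow_pos_of_pos hs0 _
      refine le_trans ?_ (key_inner (Metric.ball 0 (s^(β/α))) measurableSet_ball x
        (ENNReal.ofReal (c₁ * (c₃ * t^(-σ)) * (A0 * s^(-σ))^(1+η))) _ ?_)
      · -- numeric comparison with the ball volume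
        rw [volball _ (le_of_lt hsβ), ← ENNReal.ofReal_mul (by positivity),
          ← ENNReal.ofReal_mul (by positivity)]
        apply ENNReal.ofReal_le_ofReal
        -- key real inequality
        have hsd : ((s^(β/α)) ^ d : ℝ) = s ^ σ := by
          rw [← Real.rpow_natCast (s^(β/α)) d, ← Real.rpow_mul (le_of_lt hs0), hσdef,
            div_mul_eq_mul_div]
        have hmulr : (A0 * s^(-σ))^(1+η) = A0^(1+η) * s^(-σ*(1+η)) := by
          rw [Real.mul_rpow (le_of_lt hA0) (le_of_lt hsσ), ← Real.rpow_mul (le_of_lt hs0)]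
        have hR : c₁*(c₃*t^(-σ))*((A0*s^(-σ))^(1+η))*((s^(β/α))^d*vB)
            = B0 * t^(-σ) * s^(-(σ*η)) := by
          rw [hsd, hmulr, hB0def, show -(σ*η) = -σ*(1+η)+σ by ring, Real.rpow_add hs0]
          ring
        have h6 : s⁻¹ ≤ s^(-(σ*η)) := by
          rw [← Real.rpow_neg_one s]
          exact Real.rpow_le_rpow_of_exponent_le hs1 (by linarith [hση])
        calc B0*t^(-σ)*s⁻¹ ≤ B0*t^(-σ)*s^(-(σ*η)) :=
              mul_le_mul_of_nonneg_left h6 (by positivity)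
          _ = _ := hR.symm
      · -- pointwise bound on the ball
        intro y hy hyx
        have hyr : ‖y‖ ≤ s^(β/α) := le_of_lt (mem_ball_zero_iff.1 hy)
        have hVb : ENNReal.ofReal ((A0*s^(-σ))^(1+η)) ≤ (V s y)^(1+η) := by
          rw [← ENNReal.ofReal_rpow_of_pos (by positivity)]
          exact ENNReal.rpow_le_rpow (lemA s hsT₀ y hyr) (by positivity)
        have hz : 0 < ‖x - y‖ := by
          rw [norm_pos_iff]; exact sub_ne_zero.2 (fun he => hyx he.symm)
        have hzb : ‖x - y‖ ≤ 2 * t^(β/α) := by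
          have hsy : s^(β/α) ≤ t^(β/α) :=
            Real.rpow_le_rpow (le_of_lt hs0) (le_of_lt hst) (by positivity)
          calc ‖x-y‖ ≤ ‖x‖+‖y‖ := norm_sub_le x y
            _ ≤ t^(β/α) + s^(β/α) := add_le_add hx hyr
            _ ≤ 2*t^(β/α) := by linarith
        have hGb : c₁ * (c₃ * t^(-σ)) ≤ G (t-s) (x-y) := by
          refine le_trans ?_ (hGlow (t-s) hts (x-y))
          refine mul_le_mul_of_nonneg_left ?_ (le_of_lt hc₁)
          rw [le_min_iff]
          constructor
          · have h7 : t^(-σ) ≤ (t-s)^(-σ) :=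
              Real.rpow_le_rpow_of_nonpos hts (by linarith) (by linarith [hσ0])
            calc c₃*t^(-σ) ≤ 1*t^(-σ) :=
                  mul_le_mul_of_nonneg_right (min_le_left _ _) (le_of_lt htσ)
              _ = t^(-σ) := one_mul _
              _ ≤ (t-s)^(-σ) := h7
          · have hnum : (t/2)^β ≤ (t-s)^β :=
              Real.rpow_le_rpow (by positivity) hts2 (le_of_lt hβ0)
            have hden : ‖x-y‖^((d:ℝ)+α) ≤ (2*t^(β/α))^((d:ℝ)+α) :=
              Real.rpow_le_rpow (norm_nonneg _) hzb (le_of_lt hdα)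
            have hid : (t/2)^β / ((2*t^(β/α))^((d:ℝ)+α)) = ((2:ℝ)^(β+((d:ℝ)+α)))⁻¹ * t^(-σ) := by
              rw [Real.div_rpow (le_of_lt ht0) (by norm_num : (0:ℝ) ≤ 2),
                Real.mul_rpow (by norm_num : (0:ℝ) ≤ 2) (by positivity),
                ← Real.rpow_mul (le_of_lt ht0), hexpid,
                Real.rpow_add two_pos β ((d:ℝ)+α),
                Real.rpow_add ht0 σ β, Real.rpow_neg (le_of_lt ht0)]
              have h8 : (0:ℝ) < t^σ := Real.rpow_pos_of_pos ht0 _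
              have h9 : (0:ℝ) < t^β := Real.rpow_pos_of_pos ht0 _
              have h10 : (0:ℝ) < (2:ℝ)^β := by positivity
              have h11 : (0:ℝ) < (2:ℝ)^((d:ℝ)+α) := by positivity
              field_simp
            calc c₃ * t^(-σ) ≤ ((2:ℝ)^(β+((d:ℝ)+α)))⁻¹ * t^(-σ) :=
                  mul_le_mul_of_nonneg_right (min_le_right _ _) (le_of_lt htσ)
              _ = (t/2)^β / ((2*t^(β/α))^((d:ℝ)+α)) := hid.symm
              _ ≤ (t-s)^β / ‖x-y‖^((d:ℝ)+α) :=
                  div_le_div₀ (by positivity) hnum (Real.rpow_pos_of_pos hz _) hden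
        calc ENNReal.ofReal (c₁*(c₃*t^(-σ))*(A0*s^(-σ))^(1+η))
            = ENNReal.ofReal (c₁*(c₃*t^(-σ))) * ENNReal.ofReal ((A0*s^(-σ))^(1+η)) := by
              rw [← ENNReal.ofReal_mul (by positivity)]
          _ ≤ ENNReal.ofReal (G (t-s) (x-y)) * (V s y)^(1+η) :=
              mul_le_mul' (ENNReal.ofReal_le_ofReal hGb) hVb
  -- generic iteration step
  have step : ∀ (a rr s₁ s₂ t : ℝ) (x : EuclideanSpace ℝ (Fin d)),
      0 ≤ a → 0 < rr → 0 < s₁ → s₁ < s₂ → s₂ < t → ‖x‖ ≤ rr →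
      (∀ s ∈ Set.Icc s₁ s₂, ∀ y : EuclideanSpace ℝ (Fin d), ‖y‖ ≤ rr →
        ENNReal.ofReal a ≤ V s y) →
      ENNReal.ofReal (a^(1+η) * c₁ *
          (min ((t-s₁)^(-σ)) ((t-s₂)^β / (2*rr)^((d:ℝ)+α))) * (rr^d * vB) * (s₂ - s₁))
        ≤ V t x := by
    intro a rr s₁ s₂ t x ha hrr hs₁ hs₁₂ hs₂t hx hLB
    set mv : ℝ := min ((t-s₁)^(-σ)) ((t-s₂)^β / (2*rr)^((d:ℝ)+α)) with hmvdef
    have hts₁ : 0 < t - s₁ := by linarith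
    have hts₂ : 0 ≤ t - s₂ := by linarith
    have hmv0 : 0 ≤ mv := le_min (le_of_lt (Real.rpow_pos_of_pos hts₁ _))
      (div_nonneg (Real.rpow_nonneg hts₂ _) (Real.rpow_nonneg (by positivity) _))
    have hX0 : 0 ≤ a^(1+η) * c₁ * mv * (rr^d * vB) := by
      apply mul_nonneg (mul_nonneg (mul_nonneg (Real.rpow_nonneg ha _) (le_of_lt hc₁)) hmv0)
      positivity
    refine le_trans ?_ (nonlin t x s₁ s₂ hs₁ (le_of_lt hs₁₂) (le_of_lt hs₂t)
      (fun _ => ENNReal.ofReal (a^(1+η) * c₁ * mv * (rr^d * vB))) ?_)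
    · rw [setLIntegral_const, Real.volume_Ioo]
      exact le_of_eq (ENNReal.ofReal_mul hX0)
    · intro s hs
      have hs0 : 0 < s := lt_trans hs₁ hs.1
      have hts : 0 < t - s := by linarith [hs.2]
      refine le_trans ?_ (key_inner (Metric.ball 0 rr) measurableSet_ball x
        (ENNReal.ofReal (a^(1+η) * c₁ * mv)) _ ?_)
      · rw [volball rr (le_of_lt hrr), ← ENNReal.ofReal_mul
          (mul_nonneg (mul_nonneg (Real.rpow_nonneg ha _) (le_of_lt hc₁)) hmv0)]
      · intro y hy hyx
        have hyr : ‖y‖ ≤ rr := le_of_lt (mem_ball_zero_iff.1 hy)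
        have hVb : ENNReal.ofReal (a^(1+η)) ≤ (V s y)^(1+η) := by
          rcases eq_or_lt_of_le ha with h|h
          · rw [← h, Real.zero_rpow (by positivity : (1:ℝ)+η ≠ 0), ENNReal.ofReal_zero]
            exact zero_le
          · rw [← ENNReal.ofReal_rpow_of_pos h]
            exact ENNReal.rpow_le_rpow
              (hLB s ⟨le_of_lt hs.1, le_of_lt hs.2⟩ y hyr) (by positivity)
        have hz : 0 < ‖x - y‖ := by
          rw [norm_pos_iff]; exact sub_ne_zero.2 (fun he => hyx he.symm)
        have hGb : c₁ * mv ≤ G (t-s) (x-y) := by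
          refine le_trans ?_ (hGlow (t-s) hts (x-y))
          refine mul_le_mul_of_nonneg_left ?_ (le_of_lt hc₁)
          rw [le_min_iff]
          constructor
          · calc mv ≤ (t-s₁)^(-σ) := min_le_left _ _
              _ ≤ (t-s)^(-σ) := Real.rpow_le_rpow_of_nonpos hts
                  (by linarith [hs.1]) (by linarith [hσ0])
          · calc mv ≤ (t-s₂)^β / (2*rr)^((d:ℝ)+α) := min_le_right _ _
              _ ≤ (t-s)^β / ‖x-y‖^((d:ℝ)+α) := by
                  have h1 : (t-s₂)^β ≤ (t-s)^β :=
                    Real.rpow_le_rpow hts₂ (by linarith [hs.2]) (le_of_lt hβ0)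
                  have h2 : ‖x-y‖^((d:ℝ)+α) ≤ (2*rr)^((d:ℝ)+α) := by
                    apply Real.rpow_le_rpow (norm_nonneg _) ?_ (le_of_lt hdα)
                    calc ‖x-y‖ ≤ ‖x‖+‖y‖ := norm_sub_le x y
                      _ ≤ 2*rr := by linarith
                  exact div_le_div₀ (Real.rpow_nonneg (le_of_lt hts) _) h1
                    (Real.rpow_pos_of_pos hz _) h2
        calc ENNReal.ofReal (a^(1+η) * c₁ * mv)
            = ENNReal.ofReal (c₁ * mv) * ENNReal.ofReal (a^(1+η)) := by
              rw [← ENNReal.ofReal_mul (mul_nonneg (le_of_lt hc₁) hmv0)]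
              congr 1
              ring
          _ ≤ ENNReal.ofReal (G (t-s) (x-y)) * (V s y)^(1+η) :=
              mul_le_mul' (ENNReal.ofReal_le_ofReal hGb) hVb
  -- iteration constants
  set Q : ℝ := (4:ℝ) ^ (η⁻¹) with hQdef
  have hQ0 : (0:ℝ) < Q := Real.rpow_pos_of_pos (by norm_num) _
  have hQ : (1:ℝ) < Q := by
    rw [hQdef]
    exact Real.one_lt_rpow_iff_of_pos (by norm_num) |>.2 (Or.inl ⟨by norm_num, by positivity⟩)
  have hQη : Q ^ η = 4 := by
    rw [hQdef, ← Real.rpow_mul (by norm_num : (0:ℝ) ≤ 4), inv_mul_cancel₀ (ne_of_gt hη),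
      Real.rpow_one]
  set m₀ : ℝ := min ((3:ℝ)^(-σ)) (((2:ℝ)^((d:ℝ)+α))⁻¹) with hm₀def
  have hm₀ : 0 < m₀ := lt_min (Real.rpow_pos_of_pos (by norm_num) _) (by positivity)
  set K' : ℝ := 64 * Q / (B0^η * (c₁ * m₀ * vB)) with hK'def
  have hK' : 0 < K' := by
    have : (0:ℝ) < B0^η := Real.rpow_pos_of_pos hB0 _
    positivity
  set M : ℝ := max 1 (K' ^ η⁻¹) with hMdef
  have hM1 : (1:ℝ) ≤ M := le_max_left _ _
  have hM0 : (0:ℝ) < M := lt_of_lt_of_le one_pos hM1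
  have hMη : K' ≤ M ^ η := by
    have h1 : (K'^(η⁻¹))^η = K' := by
      rw [← Real.rpow_mul (le_of_lt hK'), inv_mul_cancel₀ (ne_of_gt hη), Real.rpow_one]
    calc K' = (K'^(η⁻¹))^η := h1.symm
      _ ≤ M^η := Real.rpow_le_rpow (by positivity) (le_max_right _ _) (le_of_lt hη)
  set T : ℝ := 2 * T₀ * Real.exp M with hTdef
  have hexpM : (2:ℝ) ≤ Real.exp M := by
    have := Real.add_one_le_exp M
    linarith
  have hT4T₀ : 4*T₀ ≤ T := by
    have h := mul_le_mul_of_nonneg_left hexpM (by positivity : (0:ℝ) ≤ 2*T₀)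
    rw [hTdef]
    linarith
  have hT0 : (0:ℝ) < T := by rw [hTdef]; positivity
  have hT1 : (1:ℝ) ≤ T := by linarith
  have hlogT : Real.log (T / (2*T₀)) = M := by
    rw [hTdef, show 2*T₀*Real.exp M/(2*T₀) = Real.exp M from by field_simp, Real.log_exp]
  set r : ℝ := T ^ (β/α) with hrdef
  have hr0 : 0 < r := Real.rpow_pos_of_pos hT0 _
  have hrd : (r ^ d : ℝ) = T ^ σ := by
    rw [hrdef, ← Real.rpow_natCast (T^(β/α)) d, ← Real.rpow_mul (le_of_lt hT0), hσdef,
      div_mul_eq_mul_div]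
  set a₀ : ℝ := B0 * M * (4*T)^(-σ) with ha₀def
  have ha₀ : 0 < a₀ := by
    have : (0:ℝ) < (4*T)^(-σ) := Real.rpow_pos_of_pos (by linarith) _
    positivity
  -- the crucial largeness condition
  have hCOND : 16*Q ≤ a₀^η * c₁ * m₀ * vB * T := by
    have h4T : (1:ℝ) ≤ 4*T := by linarith
    have h1 : a₀^η = B0^η * M^η * ((4*T)^(-σ))^η := by
      rw [ha₀def, Real.mul_rpow (by positivity) (by positivity),
        Real.mul_rpow (by positivity) (by positivity)]
    have h2 : ((4*T)^(-σ))^η = (4*T)^(-(σ*η)) := by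
      rw [← Real.rpow_mul (by linarith : (0:ℝ) ≤ 4*T)]
      congr 1
      ring
    have h3 : (4*T)^(-(1:ℝ)) ≤ (4*T)^(-(σ*η)) :=
      Real.rpow_le_rpow_of_exponent_le h4T (by linarith [hση])
    have h5 : (4:ℝ)⁻¹ ≤ (4*T)^(-(σ*η)) * T := by
      have h51 := mul_le_mul_of_nonneg_right h3 (le_of_lt hT0)
      rw [Real.rpow_neg_one] at h51
      have h52 : (4*T)⁻¹ * T = 4⁻¹ := by field_simp
      linarith
    have h7 : B0^η * (c₁ * m₀ * vB) * K' = 64*Q := by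
      rw [hK'def]
      have hB0η : (0:ℝ) < B0^η := Real.rpow_pos_of_pos hB0 _
      field_simp
    have hB0η : (0:ℝ) < B0^η := Real.rpow_pos_of_pos hB0 _
    calc 16*Q = (B0^η * (c₁ * m₀ * vB) * K') * 4⁻¹ := by rw [h7]; ring
      _ ≤ (B0^η * (c₁ * m₀ * vB) * M^η) * 4⁻¹ := by
          apply mul_le_mul_of_nonneg_right _ (by norm_num)
          exact mul_le_mul_of_nonneg_left hMη (by positivity)
      _ ≤ (B0^η * (c₁ * m₀ * vB) * M^η) * ((4*T)^(-(σ*η)) * T) := by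
          apply mul_le_mul_of_nonneg_left h5 (by positivity)
      _ = a₀^η * c₁ * m₀ * vB * T := by rw [h1, h2]; ring
  -- the induction
  have hP : ∀ n : ℕ, ∀ t ∈ Set.Icc (2*T - T*(2⁻¹:ℝ)^n) (4*T),
      ∀ x : EuclideanSpace ℝ (Fin d), ‖x‖ ≤ r → ENNReal.ofReal (a₀ * Q^n) ≤ V t x := by
    intro n
    induction n with
    | zero =>
      intro t ht x hx
      obtain ⟨ht1, ht2⟩ := ht
      rw [pow_zero, mul_one] at ht1
      have htT : T ≤ t := by linarith
      have ht4 : 4*T₀ ≤ t := le_trans hT4T₀ htT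
      have ht0 : 0 < t := by linarith
      refine le_trans ?_ (lemB t ht4 x (le_trans hx
        (Real.rpow_le_rpow (le_of_lt hT0) htT (by positivity))))
      apply ENNReal.ofReal_le_ofReal
      rw [pow_zero, mul_one, ha₀def]
      have hlog : M ≤ Real.log (t/(2*T₀)) := by
        rw [← hlogT]
        apply Real.log_le_log (by positivity)
        gcongr
      have htσ : (4*T)^(-σ) ≤ t^(-σ) :=
        Real.rpow_le_rpow_of_nonpos ht0 (by linarith) (by linarith [hσ0])
      have hlog0 : 0 ≤ M := by linarith
      calc B0 * M * (4*T)^(-σ) ≤ B0 * Real.log (t/(2*T₀)) * (4*T)^(-σ) := by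
            apply mul_le_mul_of_nonneg_right _ (by positivity)
            exact mul_le_mul_of_nonneg_left hlog (le_of_lt hB0)
        _ ≤ B0 * Real.log (t/(2*T₀)) * t^(-σ) := by
            apply mul_le_mul_of_nonneg_left htσ
            have : 0 ≤ Real.log (t/(2*T₀)) := le_trans hlog0 hlog
            positivity
    | succ n ih =>
      intro t ht x hx
      obtain ⟨htl, htr⟩ := ht
      have hp0 : (0:ℝ) < (2⁻¹:ℝ)^n := by positivity
      have hp1 : ((2⁻¹:ℝ)^n) ≤ 1 := pow_le_one₀ (by norm_num) (by norm_num)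
      have hps1 : ((2⁻¹:ℝ)^(n+1)) = (2⁻¹:ℝ)^n * 2⁻¹ := pow_succ _ _
      have hps2 : ((2⁻¹:ℝ)^(n+2)) = (2⁻¹:ℝ)^n * (2⁻¹ * 2⁻¹) := by
        rw [pow_add]; norm_num
      set s₁ : ℝ := 2*T - T*(2⁻¹:ℝ)^n with hs₁def
      set s₂ : ℝ := s₁ + T*(2⁻¹:ℝ)^(n+2) with hs₂def
      have hq : (0:ℝ) < T*(2⁻¹:ℝ)^n := by positivity
      have hq1 : T*(2⁻¹:ℝ)^n ≤ T := by
        have h := mul_le_mul_of_nonneg_left hp1 (le_of_lt hT0)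
        linarith
      have hs₁T : T ≤ s₁ := by
        rw [hs₁def]
        linarith
      have hs₁0 : 0 < s₁ := by linarith
      have hs₁₂ : s₁ < s₂ := by
        have : (0:ℝ) < T*(2⁻¹:ℝ)^(n+2) := by positivity
        rw [hs₂def]
        linarith
      have hs₂2T : s₂ ≤ 2*T := by
        rw [hs₂def, hs₁def, hps2]
        linarith
      have hs₂t : s₂ < t := by
        have h1 : 2*T - T*((2⁻¹:ℝ)^n * 2⁻¹) ≤ t := by rw [← hps1]; exact htl
        rw [hs₂def, hs₁def, hps2]
        linarith
      have hLB : ∀ s ∈ Set.Icc s₁ s₂, ∀ y : EuclideanSpace ℝ (Fin d), ‖y‖ ≤ r →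
          ENNReal.ofReal (a₀ * Q^n) ≤ V s y := by
        intro s hs y hy
        exact ih s ⟨hs.1, le_trans hs.2 (by linarith)⟩ y hy
      refine le_trans ?_ (step (a₀ * Q^n) r s₁ s₂ t x (by positivity) hr0 hs₁0 hs₁₂ hs₂t hx hLB)
      apply ENNReal.ofReal_le_ofReal
      -- arithmetic of the recursion
      set p : ℝ := (2⁻¹:ℝ)^(n+2) with hpdef
      have hp2' : 0 < p := by positivity
      have hple1 : p ≤ 1 := pow_le_one₀ (by norm_num) (by norm_num)
      have hs₂₁ : s₂ - s₁ = T*p := by rw [hs₂def]; ring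
      have hTσ0 : (0:ℝ) ≤ T^(-σ) := Real.rpow_nonneg (le_of_lt hT0) _
      have hts₁0 : (0:ℝ) < t - s₁ := by linarith
      have hts₂0 : (0:ℝ) < t - s₂ := by linarith
      have hmvlow : m₀ * p * T^(-σ) ≤
          min ((t-s₁)^(-σ)) ((t-s₂)^β/(2*r)^((d:ℝ)+α)) := by
        apply le_min
        · have h3T : (3*T)^(-σ) ≤ (t-s₁)^(-σ) :=
            Real.rpow_le_rpow_of_nonpos hts₁0 (by linarith) (by linarith [hσ0])
          have h3e : ((3*T):ℝ)^(-σ) = 3^(-σ)*T^(-σ) :=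
            Real.mul_rpow (by norm_num) (le_of_lt hT0)
          have hm1 : m₀ * p ≤ 3^(-σ) := by
            calc m₀ * p ≤ m₀ * 1 := mul_le_mul_of_nonneg_left hple1 (le_of_lt hm₀)
              _ = m₀ := mul_one _
              _ ≤ 3^(-σ) := min_le_left _ _
          calc m₀*p*T^(-σ) ≤ 3^(-σ)*T^(-σ) := mul_le_mul_of_nonneg_right hm1 hTσ0
            _ = (3*T)^(-σ) := h3e.symm
            _ ≤ (t-s₁)^(-σ) := h3T
        · have htss : T*p ≤ t - s₂ := by
            have h1 : 2*T - T*((2⁻¹:ℝ)^n * 2⁻¹) ≤ t := by rw [← hps1]; exact htl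
            have hTp : T*p = (T*(2⁻¹:ℝ)^n)*(2⁻¹*2⁻¹) := by rw [hps2]; ring
            rw [hs₂def, hs₁def]
            linarith [h1, hTp]
          have hnum : (T*p)^β ≤ (t-s₂)^β :=
            Real.rpow_le_rpow (by positivity) htss (le_of_lt hβ0)
          have hnum2 : T^β * p ≤ (T*p)^β := by
            rw [Real.mul_rpow (le_of_lt hT0) (le_of_lt hp2')]
            have hpp : p^(1:ℝ) ≤ p^β :=
              Real.rpow_le_rpow_of_exponent_ge hp2' hple1 (le_of_lt hβ1)
            rw [Real.rpow_one] at hpp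
            exact mul_le_mul_of_nonneg_left hpp (Real.rpow_nonneg (le_of_lt hT0) β)
          have hden : ((2*r):ℝ)^((d:ℝ)+α) = 2^((d:ℝ)+α) * T^(σ+β) := by
            rw [Real.mul_rpow (by norm_num) (le_of_lt hr0), hrdef,
              ← Real.rpow_mul (le_of_lt hT0), hexpid]
          have hW : (0:ℝ) < 2^((d:ℝ)+α) * T^(σ+β) := by positivity
          have hid2 : (T^β * p) / (2^((d:ℝ)+α) * T^(σ+β)) =
              ((2:ℝ)^((d:ℝ)+α))⁻¹ * p * T^(-σ) := by
            rw [Real.rpow_add hT0 σ β, Real.rpow_neg (le_of_lt hT0)]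
            have h8 : (0:ℝ) < T^σ := Real.rpow_pos_of_pos hT0 _
            have h9 : (0:ℝ) < T^β := Real.rpow_pos_of_pos hT0 _
            have h10 : (0:ℝ) < (2:ℝ)^((d:ℝ)+α) := by positivity
            field_simp
          calc m₀*p*T^(-σ) ≤ ((2:ℝ)^((d:ℝ)+α))⁻¹ * p * T^(-σ) := by
                apply mul_le_mul_of_nonneg_right _ hTσ0
                exact mul_le_mul_of_nonneg_right (min_le_right _ _) (le_of_lt hp2')
            _ = (T^β * p) / (2^((d:ℝ)+α) * T^(σ+β)) := hid2.symm
            _ ≤ (t-s₂)^β / (2^((d:ℝ)+α) * T^(σ+β)) :=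
                div_le_div₀ (Real.rpow_nonneg (le_of_lt hts₂0) _)
                  (le_trans hnum2 hnum) hW le_rfl
            _ = (t-s₂)^β / (2*r)^((d:ℝ)+α) := by rw [hden]
      have hQn : ((Q^n:ℝ))^η = (4:ℝ)^n := by
        rw [← Real.rpow_natCast Q n, ← Real.rpow_mul (le_of_lt hQ0), mul_comm,
          Real.rpow_mul (le_of_lt hQ0), hQη, Real.rpow_natCast]
      have hab : (0:ℝ) < a₀*Q^n := by positivity
      have hrw : (a₀*Q^n)^((1:ℝ)+η) = (a₀*Q^n)*(a₀^η*(4:ℝ)^n) := by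
        rw [Real.rpow_add hab 1 η, Real.rpow_one,
          Real.mul_rpow (le_of_lt ha₀) (by positivity), hQn]
      have hTσ1 : T^(-σ) * T^σ = 1 := by
        rw [← Real.rpow_add hT0]
        simp
      have hxx : (4:ℝ)^n * (p*p) * (T^(-σ)*T^σ) = 16⁻¹ := by
        rw [hTσ1, mul_one]
        have h1 : p*p = ((4:ℝ)⁻¹)^(n+2) := by
          rw [hpdef, ← mul_pow]
          norm_num
        rw [h1, pow_add, ← mul_assoc, ← mul_pow]
        norm_num
      have hkey : (a₀*Q^n)^((1:ℝ)+η) * c₁ * (m₀*p*T^(-σ)) * (T^σ*vB) * (T*p)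
          = (a₀*Q^n) * (a₀^η * c₁ * m₀ * vB * T) * 16⁻¹ := by
        rw [hrw]
        linear_combination ((a₀*Q^n) * a₀^η * c₁ * m₀ * vB * T) * hxx
      have hQstep : Q ≤ (a₀^η * c₁ * m₀ * vB * T) * 16⁻¹ := by linarith [hCOND]
      calc a₀ * Q^(n+1) = (a₀*Q^n) * Q := by rw [pow_succ]; ring
        _ ≤ (a₀*Q^n) * ((a₀^η * c₁ * m₀ * vB * T) * 16⁻¹) :=
            mul_le_mul_of_nonneg_left hQstep (by positivity)
        _ = (a₀*Q^n)^((1:ℝ)+η) * c₁ * (m₀*p*T^(-σ)) * (T^σ*vB) * (T*p) := by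
            linear_combination -hkey
        _ ≤ (a₀*Q^n)^((1:ℝ)+η) * c₁ *
              (min ((t-s₁)^(-σ)) ((t-s₂)^β/(2*r)^((d:ℝ)+α))) * (T^σ*vB) * (T*p) := by
            gcongr
        _ = (a₀*Q^n)^((1:ℝ)+η) * c₁ *
              (min ((t-s₁)^(-σ)) ((t-s₂)^β/(2*r)^((d:ℝ)+α))) * ((r^d:ℝ)*vB) * (s₂-s₁) := by
            rw [hrd, hs₂₁]
  -- blow-up on the window [2T, 4T] × ball
  have hblow : ∀ t ∈ Set.Icc (2*T) (4*T), ∀ x : EuclideanSpace ℝ (Fin d), ‖x‖ ≤ r →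
      V t x = ⊤ := by
    intro t ht x hx
    apply aux_unbounded (V t x) a₀ Q ha₀ hQ
    intro n
    refine hP n t ⟨?_, ht.2⟩ x hx
    have h1 : (0:ℝ) ≤ T*(2⁻¹:ℝ)^n := by positivity
    linarith [ht.1]
  -- propagation: V is infinite everywhere after time 2T
  refine ⟨2*T, by positivity, ?_⟩
  intro t ht x
  have h2T4 : 2*T < min t (4*T) := lt_min ht (by linarith)
  have h2T0 : (0:ℝ) < 2*T := by positivity
  have hle : min t (4*T) ≤ t := min_le_left _ _
  rw [← top_le_iff]
  refine le_trans ?_ (nonlin t x (2*T) (min t (4*T)) h2T0 (le_of_lt h2T4) hle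
    (fun _ => (⊤:ℝ≥0∞)) ?_)
  · rw [setLIntegral_const, Real.volume_Ioo]
    rw [ENNReal.top_mul (by
      exact (ENNReal.ofReal_pos.mpr (by linarith)).ne')]
  · intro s hs
    have hsIcc : s ∈ Set.Icc (2*T) (4*T) :=
      ⟨le_of_lt hs.1, le_of_lt (lt_of_lt_of_le hs.2 (min_le_right _ _))⟩
    have hts : 0 < t - s := by
      have := lt_of_lt_of_le hs.2 hle
      linarith
    rw [top_le_iff]
    rw [← top_le_iff]
    refine le_trans ?_ (key_inner (Metric.ball 0 r) measurableSet_ball x ⊤ _ ?_)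
    · rw [ENNReal.top_mul (ne_of_gt (Metric.measure_ball_pos _ _ hr0))]
    · intro y hy hyx
      have hVs : V s y = ⊤ := hblow s hsIcc y (le_of_lt (mem_ball_zero_iff.1 hy))
      have hz : 0 < ‖x - y‖ := by
        rw [norm_pos_iff]; exact sub_ne_zero.2 (fun he => hyx he.symm)
      have hGpos : 0 < G (t-s) (x-y) := by
        refine lt_of_lt_of_le ?_ (hGlow (t-s) hts (x-y))
        apply mul_pos hc₁
        apply lt_min (Real.rpow_pos_of_pos hts _)
        exact div_pos (Real.rpow_pos_of_pos hts _) (Real.rpow_pos_of_pos (by positivity) _)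
      rw [hVs, ENNReal.top_rpow_of_pos (by positivity : (0:ℝ) < 1+η),
        ENNReal.mul_top (ENNReal.ofReal_pos.mpr hGpos).ne']
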